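/- Lemma 1, part 1 (integrability). For every f ∈ D₀ and all integers k ≥ 1 and ℓ ≥ 0, the function t ↦ t^{−k+α−1} (d/dt)^ℓ [B₁T₁(t)ι₁f − B₂T₂(t)ι₂f] is Bochner integrable on (0,∞) with values in D. -/

import Mathlib

open Set MeasureTheory Real

/-- **Lemma 1, part 1 (integrability).** For every `f ∈ D₀` and all integers `k ≥ 1`, `ℓ ≥ 0`,
the function `t ↦ t^{−k+α−1} (d/dt)^ℓ [B₁T₁(t)ι₁f − B₂T₂(t)ι₂f]` is Bochner integrable on
`(0,∞)` with values in `D`. -/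
theorem lemma1_part1
    {E₁ E₂ D : Type*}
    [NormedAddCommGroup E₁] [NormedSpace ℂ E₁]
    [NormedAddCommGroup E₂] [NormedSpace ℂ E₂]
    [NormedAddCommGroup D] [NormedSpace ℂ D]
    {D₀ : Type*} [AddCommGroup D₀] [Module ℂ D₀]
    (α : ℝ) (hα : α ∈ Set.Ioo (0 : ℝ) 1)
    (T₁ : ℝ → E₁ →L[ℂ] E₁) (T₂ : ℝ → E₂ →L[ℂ] E₂)
    (hT₁0 : T₁ 0 = 1) (hT₂0 : T₂ 0 = 1)
    (Λ₁ Λ₂ : ℝ) (hΛ₁ : 1 ≤ Λ₁) (hΛ₂ : 1 ≤ Λ₂)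
    (hT₁ : ∀ t : ℝ, 0 ≤ t → ‖T₁ t‖ ≤ Λ₁)
    (hT₂ : ∀ t : ℝ, 0 ≤ t → ‖T₂ t‖ ≤ Λ₂)
    (B₁ : E₁ →L[ℂ] D) (B₂ : E₂ →L[ℂ] D)
    (ι₁ : D₀ →ₗ[ℂ] E₁) (ι₂ : D₀ →ₗ[ℂ] E₂)
    (hι₁ : Function.Injective ι₁) (hι₂ : Function.Injective ι₂)
    (A : D₀ →ₗ[ℂ] D₀)
    -- (i): the m-th derivative of `t ↦ T_j(t) ι_j f` on `[0,∞)` is `(−1)^m T_j(t) ι_j (A^m f)`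
    (hderiv₁ : ∀ (f : D₀) (m : ℕ) (t : ℝ), 0 ≤ t →
      HasDerivWithinAt (fun s : ℝ => T₁ s (ι₁ ((A ^ m) f)))
        (-(T₁ t (ι₁ ((A ^ (m + 1)) f)))) (Set.Ici 0) t)
    (hderiv₂ : ∀ (f : D₀) (m : ℕ) (t : ℝ), 0 ≤ t →
      HasDerivWithinAt (fun s : ℝ => T₂ s (ι₂ ((A ^ m) f)))
        (-(T₂ t (ι₂ ((A ^ (m + 1)) f)))) (Set.Ici 0) t)
    -- (ii)
    (hB : ∀ f : D₀, B₁ (ι₁ f) = B₂ (ι₂ f))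
    (f : D₀) (k ℓ : ℕ) (hk : 1 ≤ k) :
    IntegrableOn
      (fun t : ℝ => (t ^ (α - 1 - (k : ℝ))) •
        iteratedDerivWithin ℓ
          (fun s : ℝ => B₁ (T₁ s (ι₁ f)) - B₂ (T₂ s (ι₂ f))) (Set.Ici 0) t)
      (Ioi (0 : ℝ)) := by
  obtain ⟨hα0, hα1⟩ := hα
  -- the sequence of difference functions
  set g : ℕ → ℝ → D := fun m t => B₁ (T₁ t (ι₁ ((A ^ m) f))) - B₂ (T₂ t (ι₂ ((A ^ m) f)))
    with hgdef
  -- sign-twisted sequence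
  set h : ℕ → ℝ → D := fun m t => ((-1 : ℝ) ^ m) • (g m t : D) with hhdef
  have hg' : ∀ (m : ℕ) (t : ℝ), 0 ≤ t →
      HasDerivWithinAt (g m) (-(g (m + 1) t)) (Set.Ici 0) t := by
    intro m t ht
    have h1 := (B₁.restrictScalars ℝ).hasFDerivAt.comp_hasDerivWithinAt t (hderiv₁ f m t ht)
    have h2 := (B₂.restrictScalars ℝ).hasFDerivAt.comp_hasDerivWithinAt t (hderiv₂ f m t ht)
    have := h1.sub h2
    simp only [Function.comp_def, map_neg] at this
    convert this using 1
    · simp [hgdef]; rfl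
    simp [hgdef]
    abel
  have hh' : ∀ (m : ℕ) (t : ℝ), 0 ≤ t →
      HasDerivWithinAt (h m) (h (m + 1) t) (Set.Ici 0) t := by
    intro m t ht
    have := (hg' m t ht).const_smul ((-1 : ℝ) ^ m)
    convert this using 1
    · simp [hhdef]; rfl
    simp [hhdef, pow_succ, mul_smul]
  have hg0 : ∀ m : ℕ, g m 0 = 0 := by
    intro m
    simp [hgdef, hT₁0, hT₂0, hB ((A ^ m) f)]
  have hgcont : ∀ m : ℕ, ContinuousOn (g m) (Set.Ici 0) := fun m t ht =>
    (hg' m t ht).continuousWithinAt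
  have hnormh : ∀ (m : ℕ) (t : ℝ), ‖h m t‖ = ‖g m t‖ := by
    intro m t
    simp [hhdef, norm_smul]
  -- iterated derivatives
  have hiter : ∀ (n : ℕ), ∀ t ∈ Set.Ici (0 : ℝ),
      iteratedDerivWithin n (h 0) (Set.Ici 0) t = h n t := by
    intro n
    induction n with
    | zero => intro t ht; simp
    | succ n ih =>
      intro t ht
      rw [iteratedDerivWithin_succ,
        derivWithin_congr ih (ih t ht),
        (hh' n t ht).derivWithin (uniqueDiffOn_Ici 0 t ht)]
  -- uniform bounds
  set C : ℕ → ℝ := fun m => ‖B₁‖ * Λ₁ * ‖ι₁ ((A ^ m) f)‖ + ‖B₂‖ * Λ₂ * ‖ι₂ ((A ^ m) f)‖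
    with hCdef
  have hC0 : ∀ m, 0 ≤ C m := by
    intro m
    have h1 : (0:ℝ) ≤ Λ₁ := le_trans zero_le_one hΛ₁
    have h2 : (0:ℝ) ≤ Λ₂ := le_trans zero_le_one hΛ₂
    positivity
  have hCb : ∀ (m : ℕ) (t : ℝ), 0 ≤ t → ‖g m t‖ ≤ C m := by
    intro m t ht
    refine le_trans (norm_sub_le _ _) (add_le_add ?_ ?_)
    · calc ‖B₁ (T₁ t (ι₁ ((A ^ m) f)))‖ ≤ ‖B₁‖ * ‖T₁ t (ι₁ ((A ^ m) f))‖ := B₁.le_opNorm _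
        _ ≤ ‖B₁‖ * (Λ₁ * ‖ι₁ ((A ^ m) f)‖) := by
            refine mul_le_mul_of_nonneg_left ?_ (norm_nonneg _)
            exact le_trans ((T₁ t).le_opNorm _)
              (mul_le_mul_of_nonneg_right (hT₁ t ht) (norm_nonneg _))
        _ = ‖B₁‖ * Λ₁ * ‖ι₁ ((A ^ m) f)‖ := by ring
    · calc ‖B₂ (T₂ t (ι₂ ((A ^ m) f)))‖ ≤ ‖B₂‖ * ‖T₂ t (ι₂ ((A ^ m) f))‖ := B₂.le_opNorm _
        _ ≤ ‖B₂‖ * (Λ₂ * ‖ι₂ ((A ^ m) f)‖) := by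
            refine mul_le_mul_of_nonneg_left ?_ (norm_nonneg _)
            exact le_trans ((T₂ t).le_opNorm _)
              (mul_le_mul_of_nonneg_right (hT₂ t ht) (norm_nonneg _))
        _ = ‖B₂‖ * Λ₂ * ‖ι₂ ((A ^ m) f)‖ := by ring
  -- Taylor-type bound: all derivatives at 0 vanish, so g m t = O(t^n) near 0
  have htay : ∀ (n m : ℕ) (t : ℝ), 0 ≤ t →
      ‖g m t‖ ≤ C (m + n) * t ^ n / (n.factorial : ℝ) := by
    intro n
    induction n with
    | zero => intro m t ht; simpa using hCb m t ht
    | succ n ih =>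
      intro m t ht
      have hfact : ((n + 1).factorial : ℝ) = (n + 1) * (n.factorial : ℝ) := by
        rw [Nat.factorial_succ]; push_cast; ring
      have hfacpos : (0:ℝ) < (n.factorial : ℝ) := by positivity
      set c : ℝ := C (m + (n + 1)) with hc
      have hBderiv : ∀ x : ℝ, HasDerivAt (fun x : ℝ => c * x ^ (n + 1) / ((n + 1).factorial : ℝ))
          (c * x ^ n / (n.factorial : ℝ)) x := by
        intro x
        have := ((hasDerivAt_pow (n + 1) x).const_mul c).div_const (((n + 1).factorial : ℝ))
        refine this.congr_deriv ?_
        rw [hfact]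
        push_cast
        field_simp
      have key := image_norm_le_of_norm_deriv_right_le_deriv_boundary
        (f := g m) (f' := fun x => -(g (m + 1) x)) (a := 0) (b := t)
        ((hgcont m).mono Icc_subset_Ici_self)
        (fun x hx => (hg' m x hx.1).mono (Ici_subset_Ici.mpr hx.1))
        (B := fun x => c * x ^ (n + 1) / ((n + 1).factorial : ℝ))
        (B' := fun x => c * x ^ n / (n.factorial : ℝ))
        (by simp [hg0 m]) hBderiv
        (fun x hx => by
          rw [norm_neg]
          have := ih (m + 1) x hx.1
          have hmn : m + 1 + n = m + (n + 1) := by omega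
          rw [hmn] at this
          exact this)
      exact key (right_mem_Icc.mpr ht)
  -- identify the integrand on `Ioi 0`
  have hfun0 : (fun s : ℝ => B₁ (T₁ s (ι₁ f)) - B₂ (T₂ s (ι₂ f))) = h 0 := by
    funext s
    simp [hhdef, hgdef]
  set G : ℝ → D := fun t => (t ^ (α - 1 - (k : ℝ))) • h ℓ t with hGdef
  have hEq : Set.EqOn G
      (fun t : ℝ => (t ^ (α - 1 - (k : ℝ))) •
        iteratedDerivWithin ℓ
          (fun s : ℝ => B₁ (T₁ s (ι₁ f)) - B₂ (T₂ s (ι₂ f))) (Set.Ici 0) t)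
      (Ioi (0 : ℝ)) := by
    intro t ht
    rw [hfun0]
    simp only [hGdef, hiter ℓ t (Set.mem_Ici.mpr (le_of_lt (Set.mem_Ioi.mp ht)))]
  have hGcont : ContinuousOn G (Ioi (0 : ℝ)) := by
    refine ContinuousOn.smul (f := fun t : ℝ => t ^ (α - 1 - (k : ℝ))) ?_ ?_
    · exact continuousOn_id.rpow_const fun x hx => Or.inl (ne_of_gt hx)
    · exact (((hgcont ℓ).const_smul ((-1:ℝ) ^ ℓ)).mono Ioi_subset_Ici_self)
  have hkpos : (1:ℝ) ≤ (k:ℝ) := by exact_mod_cast hk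
  -- Integrability of G near 0
  have hint1 : IntegrableOn G (Ioc (0:ℝ) 1) := by
    refine Integrable.mono' (g := fun t => (C (ℓ + k) / (k.factorial : ℝ)) * t ^ (α - 1)) ?_ ?_ ?_
    · have hrpow : IntervalIntegrable (fun t : ℝ => t ^ (α - 1)) volume 0 1 :=
        intervalIntegral.intervalIntegrable_rpow' (by linarith)
      have := hrpow.const_mul (C (ℓ + k) / (k.factorial : ℝ))
      exact (intervalIntegrable_iff_integrableOn_Ioc_of_le zero_le_one).mp this
    · exact (hGcont.mono Ioc_subset_Ioi_self).aestronglyMeasurable measurableSet_Ioc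
    · filter_upwards [ae_restrict_mem measurableSet_Ioc] with t ht
      obtain ⟨ht0, ht1⟩ := ht
      have hrpos : (0:ℝ) ≤ t ^ (α - 1 - (k : ℝ)) := Real.rpow_nonneg (le_of_lt ht0) _
      have : ‖G t‖ = t ^ (α - 1 - (k : ℝ)) * ‖g ℓ t‖ := by
        rw [hGdef]
        simp only [norm_smul, Real.norm_eq_abs, abs_of_nonneg hrpos, hnormh]
      rw [this]
      calc t ^ (α - 1 - (k : ℝ)) * ‖g ℓ t‖
          ≤ t ^ (α - 1 - (k : ℝ)) * (C (ℓ + k) * t ^ k / (k.factorial : ℝ)) :=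
            mul_le_mul_of_nonneg_left (htay k ℓ t (le_of_lt ht0)) hrpos
        _ = (C (ℓ + k) / (k.factorial : ℝ)) * (t ^ (α - 1 - (k : ℝ)) * t ^ (k : ℝ)) := by
            rw [← Real.rpow_natCast t k]; ring
        _ = (C (ℓ + k) / (k.factorial : ℝ)) * t ^ (α - 1) := by
            rw [← Real.rpow_add ht0]; ring_nf
  -- Integrability of G near ∞
  have hint2 : IntegrableOn G (Ioi (1:ℝ)) := by
    refine Integrable.mono' (g := fun t => C ℓ * t ^ (α - 1 - (k : ℝ))) ?_ ?_ ?_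
    · exact (integrableOn_Ioi_rpow_of_lt (by linarith) one_pos).const_mul _
    · refine (hGcont.mono ?_).aestronglyMeasurable measurableSet_Ioi
      exact fun x hx => Set.mem_Ioi.mpr (lt_trans one_pos (Set.mem_Ioi.mp hx))
    · filter_upwards [ae_restrict_mem measurableSet_Ioi] with t ht
      have ht0 : (0:ℝ) < t := lt_trans one_pos ht
      have hrpos : (0:ℝ) ≤ t ^ (α - 1 - (k : ℝ)) := Real.rpow_nonneg (le_of_lt ht0) _
      have : ‖G t‖ = t ^ (α - 1 - (k : ℝ)) * ‖g ℓ t‖ := by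
        rw [hGdef]
        simp only [norm_smul, Real.norm_eq_abs, abs_of_nonneg hrpos, hnormh]
      rw [this]
      calc t ^ (α - 1 - (k : ℝ)) * ‖g ℓ t‖
          ≤ t ^ (α - 1 - (k : ℝ)) * C ℓ :=
            mul_le_mul_of_nonneg_left (hCb ℓ t (le_of_lt ht0)) hrpos
        _ = C ℓ * t ^ (α - 1 - (k : ℝ)) := by ring
  have hGint : IntegrableOn G (Ioi (0:ℝ)) := by
    rw [← Ioc_union_Ioi_eq_Ioi (zero_le_one : (0:ℝ) ≤ 1)]
    exact hint1.union hint2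
  exact hGint.congr_fun hEq measurableSet_Ioi
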